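/- Let d ≥ 3 and 1 ≤ k ≤ ⌈(d−2)/2⌉ be integers and let p be an IDF prime for (d,k). Suppose η, γ are rational numbers and there exist integers n_0 > m_0 ≥ 0 and n_1 > m_1 ≥ 0 with f^{n_0}_{η,γ}(0) = f^{m_0}_{η,γ}(0) and f^{n_1}_{η,γ}(1) = f^{m_1}_{η,γ}(1) (i.e., f_{η,γ} is PCF with both critical points 0 and 1 preperiodic). Then either both η and γ are p-integral, or γ ≠ 0 with v_p(γ) < 0 and η is p-integral with η = 0 or v_p(η) > 0. -/

import Mathlib

open Finset Function

/-- The coefficient `b_i` of `z^(d-i)` in the normalized dynamical Belyi polynomial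
`B_{d,k}`. -/
def belyiCoeff (d k i : ℕ) : ℚ :=
  ((-1 : ℚ) ^ (k - i) / ((k - i).factorial * i.factorial)) *
    ∏ j ∈ (Finset.range (k + 1)).erase i, ((d : ℚ) - (j : ℚ))

/-- The normalized dynamical Belyi polynomial `B_{d,k}` as a function on `ℚ`. -/
def belyi (d k : ℕ) (z : ℚ) : ℚ :=
  ∑ i ∈ Finset.range (k + 1), belyiCoeff d k i * z ^ (d - i)

/-- The map `f_{a,c}(z) = a · B_{d,k}(z) + c`. -/
def belyiMap (d k : ℕ) (a c z : ℚ) : ℚ := a * belyi d k z + c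

/-- `p` is an index divisor free (IDF) prime for the pair `(d,k)`:
`p` is a prime with `p > k`, `p ∣ d - r` for some `r ≤ k`, and `r ∤ v_p(d-r)`. -/
def IsIDFPrime (d k p : ℕ) : Prop :=
  p.Prime ∧ k < p ∧ ∃ r ≤ k, p ∣ (d - r) ∧ ¬ (r ∣ padicValNat p (d - r))

/-- A rational number is `p`-integral if it is zero or has nonnegative `p`-adic valuation. -/
def PIntegral (p : ℕ) (x : ℚ) : Prop := x = 0 ∨ 0 ≤ padicValRat p x

section Aux

variable {p : ℕ} [hpf : Fact p.Prime]

/-- Adding an element of strictly larger valuation (or zero) keeps valuation. -/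
lemma val_add_left {x y : ℚ} (hx : x ≠ 0)
    (h : y = 0 ∨ (y ≠ 0 ∧ padicValRat p x < padicValRat p y)) :
    x + y ≠ 0 ∧ padicValRat p (x + y) = padicValRat p x := by
  rcases h with rfl | ⟨hy, hlt⟩
  · simpa using hx
  · have hxy : x + y ≠ 0 := by
      intro hc
      have hyx : y = -x := by linarith [hc]
      rw [hyx, padicValRat.neg] at hlt
      exact lt_irrefl _ hlt
    exact ⟨hxy, padicValRat.add_eq_of_lt hxy hx hy hlt⟩

/-- Every term of a finite sum is zero or has valuation `> c`; then the sum is zero or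
has valuation `> c`. -/
lemma val_sum_tail {s : Finset ℕ} {f : ℕ → ℚ} {c : ℤ}
    (h : ∀ j ∈ s, f j = 0 ∨ (f j ≠ 0 ∧ c < padicValRat p (f j))) :
    (∑ j ∈ s, f j) = 0 ∨
      ((∑ j ∈ s, f j) ≠ 0 ∧ c < padicValRat p (∑ j ∈ s, f j)) := by
  classical
  induction s using Finset.induction_on with
  | empty => simp
  | insert a s' hxs ih =>
    rw [Finset.sum_insert hxs]
    have ha := h a (Finset.mem_insert_self a s')
    have hT := ih fun j hj => h j (Finset.mem_insert_of_mem hj)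
    rcases ha with ha | ⟨ha, hva⟩
    · rw [ha, zero_add]; exact hT
    · rcases hT with hT | ⟨hT, hvT⟩
      · rw [hT, add_zero]; exact Or.inr ⟨ha, hva⟩
      · by_cases hz : f a + ∑ j ∈ s', f j = 0
        · exact Or.inl hz
        · refine Or.inr ⟨hz, lt_of_lt_of_le (lt_min hva hvT) ?_⟩
          exact padicValRat.min_le_padicValRat_add hz

/-- If one term of a finite sum has strictly smaller valuation than all other (nonzero)
terms, the sum is nonzero and its valuation is that of the dominant term. -/
lemma val_sum_dominant {s : Finset ℕ} {f : ℕ → ℚ} {i₀ : ℕ} (hi : i₀ ∈ s)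
    (h0 : f i₀ ≠ 0)
    (hlt : ∀ j ∈ s, j ≠ i₀ →
      (f j = 0 ∨ (f j ≠ 0 ∧ padicValRat p (f i₀) < padicValRat p (f j)))) :
    (∑ j ∈ s, f j) ≠ 0 ∧ padicValRat p (∑ j ∈ s, f j) = padicValRat p (f i₀) := by
  classical
  rw [← Finset.insert_erase hi, Finset.sum_insert (Finset.notMem_erase _ _)]
  have hT := val_sum_tail (p := p) (s := s.erase i₀) (f := f) (c := padicValRat p (f i₀))
    (fun j hj => hlt j (Finset.mem_of_mem_erase hj) (Finset.ne_of_mem_erase hj))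
  rcases hT with hT | ⟨hT, hvT⟩
  · rw [hT, add_zero]; exact ⟨h0, rfl⟩
  · exact val_add_left h0 (Or.inr ⟨hT, hvT⟩)

/-- Valuation of a finite product of nonzero rationals. -/
lemma val_prod {s : Finset ℕ} {f : ℕ → ℚ} (h : ∀ j ∈ s, f j ≠ 0) :
    (∏ j ∈ s, f j) ≠ 0 ∧
      padicValRat p (∏ j ∈ s, f j) = ∑ j ∈ s, padicValRat p (f j) := by
  classical
  induction s using Finset.induction_on with
  | empty => simp
  | insert a s' hxs ih =>
    rw [Finset.prod_insert hxs, Finset.sum_insert hxs]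
    have ha := h a (Finset.mem_insert_self a s')
    obtain ⟨hT, hvT⟩ := ih fun j hj => h j (Finset.mem_insert_of_mem hj)
    exact ⟨mul_ne_zero ha hT, by rw [padicValRat.mul ha hT, hvT]⟩

/-- If `P` is preserved by `g` with strictly decreasing valuation, no `P`-point can be
preperiodic. -/
lemma no_preperiodic {g : ℚ → ℚ} {P : ℚ → Prop}
    (hP : ∀ w, P w → P (g w) ∧ padicValRat p (g w) < padicValRat p w)
    {x : ℚ} {n m : ℕ} (hmn : m < n) (h : g^[n] x = g^[m] x) (hx : P x) : False := by
  have hPall : ∀ j, P (g^[j] x) := by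
    intro j
    induction j with
    | zero => simpa using hx
    | succ j ih => rw [Function.iterate_succ_apply']; exact (hP _ ih).1
  have hu : StrictAnti fun j => padicValRat p (g^[j] x) :=
    strictAnti_nat_of_succ_lt fun j => by
      rw [Function.iterate_succ_apply']; exact (hP _ (hPall j)).2
  exact absurd (congrArg (padicValRat p) h) (ne_of_lt (hu hmn))

end Aux

section Belyi

variable {d k p r : ℕ} [hpf : Fact p.Prime]

lemma belyi_zero (hkd : k + 2 ≤ d) : belyi d k 0 = 0 := by
  unfold belyi
  refine Finset.sum_eq_zero fun i hi => ?_
  rw [Finset.mem_range] at hi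
  rw [zero_pow (by omega), mul_zero]

lemma val_factor (hkp : k < p) (hrk : r ≤ k) (hkd : k + 2 ≤ d) (hdvd : p ∣ d - r)
    {j : ℕ} (hj : j ≤ k) :
    ((d : ℚ) - j ≠ 0) ∧
      padicValRat p ((d : ℚ) - j)
        = if j = r then (padicValNat p (d - r) : ℤ) else 0 := by
  have hjd : j < d := by omega
  have hcast : (d : ℚ) - j = ((d - j : ℕ) : ℚ) := by
    rw [Nat.cast_sub hjd.le]
  constructor
  · rw [hcast]
    exact_mod_cast Nat.sub_ne_zero_of_lt hjd
  · rw [hcast, padicValRat.of_nat]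
    split_ifs with hjr
    · rw [hjr]
    · norm_cast
      apply padicValNat.eq_zero_of_not_dvd
      intro hpj
      have h1 : p ∣ (d - j) - (d - r) := Nat.dvd_sub hpj hdvd
      have h2 : p ∣ (d - r) - (d - j) := Nat.dvd_sub hdvd hpj
      rcases Nat.lt_or_ge j r with hlt | hge
      · have : (d - j) - (d - r) = r - j := by omega
        rw [this] at h1
        have := Nat.le_of_dvd (by omega) h1
        omega
      · have hlt : r < j := by omega
        have : (d - r) - (d - j) = j - r := by omega
        rw [this] at h2
        have := Nat.le_of_dvd (by omega) h2
        omega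

lemma val_coeff (hkp : k < p) (hrk : r ≤ k) (hkd : k + 2 ≤ d) (hdvd : p ∣ d - r)
    {i : ℕ} (hi : i ≤ k) :
    belyiCoeff d k i ≠ 0 ∧
      padicValRat p (belyiCoeff d k i)
        = if i = r then 0 else (padicValNat p (d - r) : ℤ) := by
  have hmem : ∀ j ∈ (Finset.range (k + 1)).erase i, j ≤ k := fun j hj => by
    have := Finset.mem_of_mem_erase hj
    rw [Finset.mem_range] at this; omega
  obtain ⟨hprod, hvprod⟩ := val_prod (p := p)
    (s := (Finset.range (k + 1)).erase i) (f := fun j => (d : ℚ) - j)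
    (fun j hj => (val_factor hkp hrk hkd hdvd (hmem j hj)).1)
  -- the scalar factor
  have hs1 : ((-1 : ℚ) ^ (k - i)) ≠ 0 := pow_ne_zero _ (by norm_num)
  have hs2 : (((k - i).factorial : ℚ) * (i.factorial : ℚ)) ≠ 0 := by
    positivity
  have hA : ((-1 : ℚ) ^ (k - i) / ((k - i).factorial * i.factorial)) ≠ 0 :=
    div_ne_zero hs1 hs2
  have hfact : ∀ n : ℕ, n ≤ k → padicValRat p (n.factorial : ℚ) = 0 := by
    intro n hn
    rw [padicValRat.of_nat]
    norm_cast
    apply padicValNat.eq_zero_of_not_dvd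
    rw [Nat.Prime.dvd_factorial hpf.out]
    omega
  have hvA : padicValRat p ((-1 : ℚ) ^ (k - i) / ((k - i).factorial * i.factorial)) = 0 := by
    rw [padicValRat.div hs1 hs2, padicValRat.pow (-1 : ℚ),
      padicValRat.mul (by positivity) (by positivity),
      hfact _ (by omega), hfact _ hi]
    simp [padicValRat.neg, padicValRat.one]
  constructor
  · exact mul_ne_zero hA hprod
  · rw [belyiCoeff, padicValRat.mul hA hprod, hvA, zero_add, hvprod]
    have : ∀ j ∈ (Finset.range (k + 1)).erase i,
        padicValRat p ((d : ℚ) - j)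
          = if j = r then (padicValNat p (d - r) : ℤ) else 0 := fun j hj =>
      (val_factor hkp hrk hkd hdvd (hmem j hj)).2
    rw [Finset.sum_congr rfl this, Finset.sum_ite_eq' _ r
      (fun _ => (padicValNat p (d - r) : ℤ))]
    have hmem_r : r ∈ (Finset.range (k + 1)).erase i ↔ r ≠ i := by
      simp [Finset.mem_erase, Finset.mem_range, Nat.lt_succ_iff, hrk]
    by_cases h2 : i = r
    · rw [if_pos h2, if_neg (by rw [hmem_r]; omega)]
    · rw [if_neg h2, if_pos (hmem_r.mpr fun hc => h2 hc.symm)]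

lemma val_term (hkp : k < p) (hrk : r ≤ k) (hkd : k + 2 ≤ d) (hdvd : p ∣ d - r)
    {i : ℕ} (hi : i ≤ k) {z : ℚ} (hz : z ≠ 0) :
    belyiCoeff d k i * z ^ (d - i) ≠ 0 ∧
      padicValRat p (belyiCoeff d k i * z ^ (d - i))
        = (if i = r then 0 else (padicValNat p (d - r) : ℤ))
          + ((d : ℤ) - i) * padicValRat p z := by
  obtain ⟨hb, hvb⟩ := val_coeff hkp hrk hkd hdvd hi
  have hzp : z ^ (d - i) ≠ 0 := pow_ne_zero _ hz
  refine ⟨mul_ne_zero hb hzp, ?_⟩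
  rw [padicValRat.mul hb hzp, hvb, padicValRat.pow z]
  congr 1
  have : ((d - i : ℕ) : ℤ) = (d : ℤ) - i := by omega
  rw [← this]

lemma val_belyi_one (hkp : k < p) (hrk : r ≤ k) (hkd : k + 2 ≤ d) (hdvd : p ∣ d - r) :
    belyi d k 1 ≠ 0 ∧ padicValRat p (belyi d k 1) = 0 := by
  have he : 0 < (padicValNat p (d - r) : ℤ) := by
    exact_mod_cast one_le_padicValNat_of_dvd (by omega) hdvd
  have h1 : belyi d k 1 = ∑ i ∈ Finset.range (k + 1), belyiCoeff d k i := by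
    unfold belyi; exact Finset.sum_congr rfl fun i _ => by rw [one_pow, mul_one]
  rw [h1]
  have hd := val_sum_dominant (p := p) (s := Finset.range (k + 1))
    (f := fun i => belyiCoeff d k i) (i₀ := r)
    (by rw [Finset.mem_range]; omega)
    (val_coeff hkp hrk hkd hdvd hrk).1
    (fun j hj hjr => by
      rw [Finset.mem_range] at hj
      obtain ⟨hb, hvb⟩ := val_coeff hkp hrk hkd hdvd (show j ≤ k by omega)
      refine Or.inr ⟨hb, ?_⟩
      rw [hvb, (val_coeff hkp hrk hkd hdvd hrk).2, if_pos rfl, if_neg hjr]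
      exact he)
  refine ⟨hd.1, ?_⟩
  rw [hd.2, (val_coeff hkp hrk hkd hdvd hrk).2, if_pos rfl]

lemma val_belyi_neg (hkp : k < p) (hrk : r ≤ k) (hkd : k + 2 ≤ d) (hdvd : p ∣ d - r)
    (hnd : ¬ r ∣ padicValNat p (d - r)) {z : ℚ} (hz : z ≠ 0)
    (hm : padicValRat p z < 0) :
    belyi d k z ≠ 0 ∧ padicValRat p (belyi d k z) ≤ 2 * padicValRat p z := by
  set m := padicValRat p z with hmdef
  set e : ℤ := (padicValNat p (d - r) : ℤ) with hedef
  have he : 0 < e := by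
    rw [hedef]
    exact_mod_cast one_le_padicValNat_of_dvd (by omega) hdvd
  have hem : e + r * m ≠ 0 := by
    intro hc
    apply hnd
    have hdv : (r : ℤ) ∣ e := ⟨-m, by linarith⟩
    rw [hedef] at hdv
    exact_mod_cast hdv
  have hdr2 : (2 : ℤ) ≤ (d : ℤ) - r := by omega
  -- valuation of term i
  have hV : ∀ i : ℕ, i ≤ k →
      belyiCoeff d k i * z ^ (d - i) ≠ 0 ∧
        padicValRat p (belyiCoeff d k i * z ^ (d - i))
          = (if i = r then 0 else e) + ((d : ℤ) - i) * m :=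
    fun i hi => val_term hkp hrk hkd hdvd hi hz
  by_cases hcase : 0 < e + r * m
  · -- dominant index r
    have hdom := val_sum_dominant (p := p) (s := Finset.range (k + 1))
      (f := fun i => belyiCoeff d k i * z ^ (d - i)) (i₀ := r)
      (by rw [Finset.mem_range]; omega) (hV r hrk).1
      (fun j hj hjr => by
        rw [Finset.mem_range] at hj
        have hjk : j ≤ k := by omega
        refine Or.inr ⟨(hV j hjk).1, ?_⟩
        rw [(hV j hjk).2, (hV r hrk).2, if_pos rfl, if_neg hjr, zero_add]
        have hjm : (j : ℤ) * m ≤ 0 :=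
          mul_nonpos_of_nonneg_of_nonpos (by positivity) (le_of_lt hm)
        nlinarith)
    constructor
    · exact hdom.1
    · rw [show belyi d k z = ∑ i ∈ Finset.range (k + 1),
        belyiCoeff d k i * z ^ (d - i) from rfl, hdom.2, (hV r hrk).2, if_pos rfl,
        zero_add]
      nlinarith
  · -- dominant index 0
    have hem' : e + r * m < 0 := lt_of_le_of_ne (not_lt.mp hcase) hem
    have hr0 : r ≠ 0 := by
      intro hc; rw [hc] at hem'; simp at hem'; omega
    have h0r : (0 : ℕ) ≠ r := fun hc => hr0 hc.symm
    have hdom := val_sum_dominant (p := p) (s := Finset.range (k + 1))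
      (f := fun i => belyiCoeff d k i * z ^ (d - i)) (i₀ := 0)
      (by rw [Finset.mem_range]; omega) (hV 0 (by omega)).1
      (fun j hj hjr => by
        rw [Finset.mem_range] at hj
        have hjk : j ≤ k := by omega
        refine Or.inr ⟨(hV j hjk).1, ?_⟩
        rw [(hV j hjk).2, (hV 0 (by omega)).2, if_neg h0r]
        by_cases hjreq : j = r
        · rw [if_pos hjreq, hjreq, zero_add]
          push_cast
          nlinarith
        · rw [if_neg hjreq]
          have hj1 : (1 : ℤ) ≤ (j : ℤ) := by
            have : j ≠ 0 := hjr
            omega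
          have : (j : ℤ) * m ≤ (j : ℤ) * (-1) :=
            mul_le_mul_of_nonneg_left (by omega) (by omega)
          push_cast
          nlinarith)
    constructor
    · exact hdom.1
    · rw [show belyi d k z = ∑ i ∈ Finset.range (k + 1),
        belyiCoeff d k i * z ^ (d - i) from rfl, hdom.2, (hV 0 (by omega)).2,
        if_neg h0r]
      push_cast
      nlinarith

end Belyi

/-- (Preperiodic case.)  If both critical points `0` and `1` are
preperiodic for `f_{η,γ}`, then either both `η` and `γ` are `p`-integral, or
`v_p(γ) < 0` and `η = 0` or `v_p(η) > 0`. -/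
theorem pcf_preperiodic_params (d k p : ℕ) (hd : 3 ≤ d) (hk1 : 1 ≤ k)
    (hk2 : k ≤ (d - 1) / 2) (hp : IsIDFPrime d k p)
    (η γ : ℚ) (n₀ m₀ n₁ m₁ : ℕ) (h0lt : m₀ < n₀) (h1lt : m₁ < n₁)
    (h0 : (belyiMap d k η γ)^[n₀] 0 = (belyiMap d k η γ)^[m₀] 0)
    (h1 : (belyiMap d k η γ)^[n₁] 1 = (belyiMap d k η γ)^[m₁] 1) :
    (PIntegral p η ∧ PIntegral p γ) ∨
      (γ ≠ 0 ∧ padicValRat p γ < 0 ∧ (η = 0 ∨ 0 < padicValRat p η)) := by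
  obtain ⟨hpp, hkp, r, hrk, hdvd, hnd⟩ := hp
  haveI : Fact p.Prime := ⟨hpp⟩
  have hkd : k + 2 ≤ d := by omega
  set g := belyiMap d k η γ with hgdef
  -- trivial case η = 0
  by_cases hη : η = 0
  · by_cases hγ : PIntegral p γ
    · exact Or.inl ⟨Or.inl hη, hγ⟩
    · rw [PIntegral] at hγ
      push_neg at hγ
      exact Or.inr ⟨hγ.1, hγ.2, Or.inl hη⟩
  -- now η ≠ 0
  by_cases hγ : PIntegral p γ
  · -- Case A : γ is p-integral; show η is p-integral
    left
    refine ⟨?_, hγ⟩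
    by_contra hPη
    rw [PIntegral] at hPη
    push_neg at hPη
    obtain ⟨-, hvη⟩ := hPη
    
    -- the invariant
    set P : ℚ → Prop := fun w => w ≠ 0 ∧ padicValRat p w < 0 with hPdef
    -- one application of `g`
    have hstep : ∀ w, P w → P (g w) ∧ padicValRat p (g w) < padicValRat p w := by
      rintro w ⟨hw, hvw⟩
      obtain ⟨hB, hvB⟩ := val_belyi_neg hkp hrk hkd hdvd hnd hw hvw
      have hηB : η * belyi d k w ≠ 0 := mul_ne_zero hη hB
      have hvηB : padicValRat p (η * belyi d k w) < padicValRat p w := by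
        rw [padicValRat.mul hη hB]
        nlinarith
      have hvηB0 : padicValRat p (η * belyi d k w) < 0 := lt_trans hvηB hvw
      have hadd := val_add_left (p := p) hηB (by
        rcases eq_or_ne γ 0 with hγ0 | hγ0
        · exact Or.inl hγ0
        · exact Or.inr ⟨hγ0, lt_of_lt_of_le hvηB0 (hγ.resolve_left hγ0)⟩)
      have hgw : g w = η * belyi d k w + γ := rfl
      rw [← hgw] at hadd
      exact ⟨⟨hadd.1, by rw [hadd.2]; exact hvηB0⟩, by rw [hadd.2]; exact hvηB⟩
    -- base point `g 1`
    obtain ⟨hB1, hvB1⟩ := val_belyi_one (p := p) (r := r) hkp hrk hkd hdvd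
    have hηB1 : η * belyi d k 1 ≠ 0 := mul_ne_zero hη hB1
    have hvηB1 : padicValRat p (η * belyi d k 1) < 0 := by
      rw [padicValRat.mul hη hB1, hvB1, add_zero]; exact hvη
    have hbase0 := val_add_left (p := p) hηB1 (by
      rcases eq_or_ne γ 0 with hγ0 | hγ0
      · exact Or.inl hγ0
      · exact Or.inr ⟨hγ0, lt_of_lt_of_le hvηB1 (hγ.resolve_left hγ0)⟩)
    have hg1 : g 1 = η * belyi d k 1 + γ := rfl
    rw [← hg1] at hbase0
    have hbase : P (g 1) := ⟨hbase0.1, by rw [hbase0.2]; exact hvηB1⟩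
    have h1' : g^[n₁] (g 1) = g^[m₁] (g 1) := by
      rw [← Function.iterate_succ_apply, ← Function.iterate_succ_apply,
        Function.iterate_succ_apply', Function.iterate_succ_apply', h1]
    exact no_preperiodic hstep h1lt h1' hbase
  · -- Case B : γ is not p-integral
    rw [PIntegral] at hγ
    push_neg at hγ
    obtain ⟨hγ0, hvγ'⟩ := hγ
    have hvγ : padicValRat p γ < 0 := hvγ'
    right
    refine ⟨hγ0, hvγ, ?_⟩
    by_contra hPη
    push_neg at hPη
    obtain ⟨-, hvη'⟩ := hPη
    have hvη : padicValRat p η ≤ 0 := hvη'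
    set P : ℚ → Prop := fun w => w ≠ 0 ∧ padicValRat p w < padicValRat p γ with hPdef
    have hstep : ∀ w, P w → P (g w) ∧ padicValRat p (g w) < padicValRat p w := by
      rintro w ⟨hw, hvw⟩
      have hvw0 : padicValRat p w < 0 := lt_trans hvw hvγ
      obtain ⟨hB, hvB⟩ := val_belyi_neg hkp hrk hkd hdvd hnd hw hvw0
      have hηB : η * belyi d k w ≠ 0 := mul_ne_zero hη hB
      have hvηB : padicValRat p (η * belyi d k w) < padicValRat p w := by
        rw [padicValRat.mul hη hB]
        nlinarith
      have hvηBγ : padicValRat p (η * belyi d k w) < padicValRat p γ :=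
        lt_trans hvηB hvw
      have hadd := val_add_left (p := p) hηB (Or.inr ⟨hγ0, hvηBγ⟩)
      have hgw : g w = η * belyi d k w + γ := rfl
      rw [← hgw] at hadd
      exact ⟨⟨hadd.1, by rw [hadd.2]; exact hvηBγ⟩, by rw [hadd.2]; exact hvηB⟩
    -- base point `g (g 0) = g γ`
    have hg0 : g 0 = γ := by
      show η * belyi d k 0 + γ = γ
      rw [belyi_zero hkd, mul_zero, zero_add]
    obtain ⟨hBγ, hvBγ⟩ := val_belyi_neg hkp hrk hkd hdvd hnd hγ0 hvγ
    have hηBγ : η * belyi d k γ ≠ 0 := mul_ne_zero hη hBγ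
    have hvηBγ : padicValRat p (η * belyi d k γ) < padicValRat p γ := by
      rw [padicValRat.mul hη hBγ]
      nlinarith
    have hadd := val_add_left (p := p) hηBγ (Or.inr ⟨hγ0, hvηBγ⟩)
    have hgγ : g γ = η * belyi d k γ + γ := rfl
    rw [← hgγ] at hadd
    have hbase : P (g (g 0)) := by
      rw [hg0]
      exact ⟨hadd.1, by rw [hadd.2]; exact hvηBγ⟩
    have h0' : g^[n₀] (g (g 0)) = g^[m₀] (g (g 0)) := by
      rw [← Function.iterate_succ_apply, ← Function.iterate_succ_apply,
        ← Function.iterate_succ_apply, ← Function.iterate_succ_apply,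
        Function.iterate_succ_apply', Function.iterate_succ_apply',
        Function.iterate_succ_apply', Function.iterate_succ_apply', h0]
    exact no_preperiodic hstep h0lt h0' hbase
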